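/- (Exact repair for the NMBR construction.) Let q be a prime power, m, d, n positive integers with d ≤ n−1, θ : F_{q^m} → M_m(F_q) an injective ring homomorphism, and γ_1, …, γ_n pairwise distinct elements of F_{q^m}. For j ∈ {1,…,n}, let M_j = ( θ(γ_j^0) | θ(γ_j^1) | ⋯ | θ(γ_j^{d−1}) ) ∈ F_q^{m×md}. Then for every i ∈ {1,…,n}, every subset D ⊆ {1,…,n}\{i} with |D| = d, and every pair of symmetric matrices X, X' ∈ F_q^{md×md}: if M_j·X·M_iᵀ = M_j·X'·M_iᵀ for all j ∈ D, then M_i·X = M_i·X'. (Hence the content M_i·X of a failed node i is determined by the m×m downloads M_j·X·M_iᵀ from any d helper nodes.) -/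
import Mathlib


open Matrix

/-- The block-Vandermonde encoding row of the NMBR construction:
`nmbrRow θ g = ( θ(g^0) | θ(g^1) | ⋯ | θ(g^(d-1)) )`, an `m × md` matrix. -/
def nmbrRow {F K : Type*} [Semiring F] [Semiring K] {m d : ℕ}
    (θ : K →+* Matrix (Fin m) (Fin m) F) (g : K) :
    Matrix (Fin m) (Fin d × Fin m) F :=
  fun a p => θ (g ^ (p.1 : ℕ)) a p.2

theorem stmt6 (q m d n : ℕ) (hq : IsPrimePow q) (hm : 0 < m) (hd : 0 < d)
    (hn : 0 < n) (hdn : d ≤ n - 1)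
    (F K : Type*) [Field F] [Field K] [Fintype F] [Fintype K]
    (hF : Fintype.card F = q) (hK : Fintype.card K = q ^ m)
    (θ : K →+* Matrix (Fin m) (Fin m) F) (hθ : Function.Injective θ)
    (γ : Fin n → K) (hγ : Function.Injective γ)
    (i : Fin n) (D : Finset (Fin n)) (hiD : i ∉ D) (hD : D.card = d)
    (X X' : Matrix (Fin d × Fin m) (Fin d × Fin m) F)
    (hX : X.IsSymm) (hX' : X'.IsSymm)
    (h : ∀ j ∈ D,
      nmbrRow (d := d) θ (γ j) * X * (nmbrRow (d := d) θ (γ i))ᵀ =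
        nmbrRow (d := d) θ (γ j) * X' * (nmbrRow (d := d) θ (γ i))ᵀ) :
    nmbrRow (d := d) θ (γ i) * X = nmbrRow (d := d) θ (γ i) * X' := by
  classical
  -- enumerate the helper set D
  set g : Fin d → K := fun k => γ (D.orderIsoOfFin hD k) with hg
  have hginj : Function.Injective g := by
    intro a b hab
    exact (D.orderIsoOfFin hD).injective (Subtype.coe_injective (hγ hab))
  -- the block Vandermonde matrix
  set V : Matrix (Fin d) (Fin d) K := Matrix.vandermonde g with hV
  have hVunit : IsUnit V := by
    rw [Matrix.isUnit_iff_isUnit_det, Matrix.det_vandermonde]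
    refine isUnit_iff_ne_zero.mpr ?_
    refine Finset.prod_ne_zero_iff.mpr fun a _ => Finset.prod_ne_zero_iff.mpr fun b hb => ?_
    exact sub_ne_zero.mpr fun hgeq => (Finset.mem_Ioi.mp hb).ne' (hginj hgeq)
  set S : Matrix (Fin d × Fin m) (Fin d × Fin m) F :=
    Matrix.compRingEquiv (Fin d) (Fin m) F (θ.mapMatrix V) with hS
  have hSunit : IsUnit S := by
    exact (hVunit.map θ.mapMatrix).map (Matrix.compRingEquiv (Fin d) (Fin m) F)
  -- the difference matrix
  set Y : Matrix (Fin d × Fin m) (Fin d × Fin m) F := X - X' with hY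
  set W : Matrix (Fin d × Fin m) (Fin m) F := Y * (nmbrRow (d := d) θ (γ i))ᵀ with hW
  have hrow : ∀ j ∈ D, nmbrRow (d := d) θ (γ j) * W = 0 := by
    intro j hj
    have := h j hj
    rw [hW, hY, Matrix.sub_mul, Matrix.mul_sub, ← Matrix.mul_assoc, ← Matrix.mul_assoc, this,
      sub_self]
  have hSW : S * W = 0 := by
    ext ⟨k, a⟩ b
    have hk := hrow _ ((D.orderIsoOfFin hD k).2)
    have h2 : (S * W) (k, a) b = (nmbrRow (d := d) θ (g k) * W) a b := rfl
    rw [h2, hk]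
    simp
  have hW0 : W = 0 := by
    have hdet : IsUnit S.det := (Matrix.isUnit_iff_isUnit_det S).mp hSunit
    calc W = (S⁻¹ * S) * W := by rw [Matrix.nonsing_inv_mul S hdet, Matrix.one_mul]
    _ = S⁻¹ * (S * W) := by rw [Matrix.mul_assoc]
    _ = 0 := by rw [hSW, Matrix.mul_zero]
  have hYsymm : Yᵀ = Y := by rw [hY, Matrix.transpose_sub, hX, hX']
  have : (nmbrRow (d := d) θ (γ i) * Y)ᵀ = 0 := by
    rw [Matrix.transpose_mul, hYsymm, ← hW, hW0]
  have h0 : nmbrRow (d := d) θ (γ i) * Y = 0 := by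
    simpa using congrArg Matrix.transpose this
  have := h0
  rw [hY, Matrix.mul_sub, sub_eq_zero] at this
  exact this
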